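/- arXiv:1412.1203 — 4 statements merged into one kernel-verified Lean document; each statement's English description precedes it below -/
import Mathlib

section
/- If u and v are complex numbers with 0 ≤ |v| ≤ 1 and (k+1)·m ≤ |u|, where m ≥ 1 is an integer and k > 0 is real, then |(1 + v/u)^(-m) - 1| ≤ |v|/k. -/
theorem neg_bin_inequality (u v : ℂ) (m : ℕ) (k : ℝ) (hu : u ≠ 0)
    (hm : 1 ≤ m) (hk : 0 < k) (hv : ‖v‖ ≤ 1)
    (huk : (k + 1) * m ≤ ‖u‖) :
    ‖(1 + v / u) ^ (-(m : ℤ)) - 1‖ ≤ ‖v‖ / k := by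
  set a := ‖v‖ with hadef
  set b := ‖u‖ with hbdef
  have hm1 : (1:ℝ) ≤ (m:ℝ) := by exact_mod_cast hm
  have ha : 0 ≤ a := norm_nonneg v
  have hb : 1 < b := by nlinarith
  have hbpos : (0:ℝ) < b := by linarith
  set x := a / b with hxdef
  have hx0 : 0 ≤ x := div_nonneg ha hbpos.le
  have hx1 : x < 1 := by rw [div_lt_one hbpos]; linarith
  have h1x : (0:ℝ) < 1 - x := by linarith
  have hw : ‖v / u‖ = x := by rw [norm_div]
  have h1w : 1 - x ≤ ‖1 + v / u‖ := by
    have h := norm_add_le (1 + v / u) (-(v / u))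
    simp only [add_neg_cancel_right, norm_one] at h
    rw [norm_neg, hw] at h
    linarith
  have h1wpos : 0 < ‖1 + v / u‖ := lt_of_lt_of_le h1x h1w
  have h1wne : (1 + v / u) ≠ 0 := by
    intro h; rw [h] at h1wpos; simp at h1wpos
  set z := (1 + v / u)⁻¹ with hzdef
  have hzabs : ‖z‖ ≤ (1 - x)⁻¹ := by
    rw [hzdef, norm_inv]
    exact inv_anti₀ h1x h1w
  have h1xinv : (1:ℝ) ≤ (1 - x)⁻¹ := by
    rw [le_inv_comm₀ one_pos h1x] <;> linarith
  have hz_mul : z * (1 + v / u) = 1 := inv_mul_cancel₀ h1wne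
  have hz1 : ‖z - 1‖ ≤ x * (1 - x)⁻¹ := by
    have heq : z - 1 = -(v / u) * z := by
      calc z - 1 = z - z * (1 + v / u) := by rw [hz_mul]
        _ = -(v / u) * z := by ring
    rw [heq, norm_mul, norm_neg, hw]
    exact mul_le_mul_of_nonneg_left hzabs hx0
  have hgoal_eq : (1 + v / u) ^ (-(m : ℤ)) = z ^ m := by
    rw [zpow_neg, zpow_natCast, hzdef, inv_pow]
  rw [hgoal_eq]
  have hsum : ‖∑ i ∈ Finset.range m, z ^ i‖ ≤ m * (1 - x)⁻¹ ^ (m - 1) := by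
    calc ‖∑ i ∈ Finset.range m, z ^ i‖
        ≤ ∑ i ∈ Finset.range m, ‖z ^ i‖ := norm_sum_le _ _
      _ ≤ ∑ i ∈ Finset.range m, (1 - x)⁻¹ ^ (m - 1) := by
          apply Finset.sum_le_sum
          intro i hi
          rw [norm_pow]
          calc ‖z‖ ^ i ≤ (1 - x)⁻¹ ^ i :=
                pow_le_pow_left₀ (norm_nonneg z) hzabs i
            _ ≤ (1 - x)⁻¹ ^ (m - 1) := by
                apply pow_le_pow_right₀ h1xinv
                have := Finset.mem_range.mp hi
                omega
      _ = m * (1 - x)⁻¹ ^ (m - 1) := by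
          rw [Finset.sum_const, Finset.card_range, nsmul_eq_mul]
  have key : ‖z ^ m - 1‖ ≤ m * x * ((1 - x)⁻¹ ^ m) := by
    have hgeo : z ^ m - 1 = (∑ i ∈ Finset.range m, z ^ i) * (z - 1) := (geom_sum_mul z m).symm
    rw [hgeo, norm_mul]
    calc ‖∑ i ∈ Finset.range m, z ^ i‖ * ‖z - 1‖
        ≤ (m * (1 - x)⁻¹ ^ (m - 1)) * (x * (1 - x)⁻¹) := by
          apply mul_le_mul hsum hz1 (norm_nonneg _)
          positivity
      _ = m * x * ((1 - x)⁻¹ ^ (m - 1) * (1 - x)⁻¹) := by ring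
      _ = m * x * (1 - x)⁻¹ ^ m := by
          rw [← pow_succ]
          congr 2
          omega
  refine key.trans ?_
  have hpowpos : (0:ℝ) < (1 - x) ^ m := pow_pos h1x m
  have hbern : 1 - m * x ≤ (1 - x) ^ m := by
    have := one_add_mul_le_pow (a := -x) (by linarith) m
    rw [← sub_eq_add_neg] at this
    linarith
  have hkey2 : k * m ≤ b * (1 - x) ^ m := by
    have h1 : b * (1 - m * x) = b - m * a := by
      rw [hxdef]
      field_simp [hbpos.ne']
    nlinarith [mul_le_mul_of_nonneg_left hbern hbpos.le]
  rw [inv_pow, ← div_eq_mul_inv, div_le_div_iff₀ hpowpos hk]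
  have hxa : x * b = a := by rw [hxdef]; field_simp [hbpos.ne']
  calc (m:ℝ) * x * k = (k * m) * x := by ring
    _ ≤ (b * (1 - x) ^ m) * x := mul_le_mul_of_nonneg_right hkey2 hx0
    _ = (x * b) * (1 - x) ^ m := by ring
    _ = a * (1 - x) ^ m := by rw [hxa]
end

section
/- Define σ(θ) = exp(θ + β) - θ^m for a real constant β and a positive integer m, as a function of a complex variable θ. Then σ has at most one zero of order 2 and no zeroes of order 3 or higher; moreover, if θ is a common zero of σ and σ', then θ = m. -/
lemma nat_pow_key (m : ℕ) (hm : 1 ≤ m) :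
    m ^ m = m * (m - 1) * m ^ (m - 2) + m ^ (m - 1) := by
  obtain ⟨k, rfl⟩ := Nat.exists_eq_add_of_le hm
  cases k with
  | zero => norm_num
  | succ j =>
    have e1 : 1 + (j + 1) = j + 2 := by omega
    rw [e1]
    have h1 : j + 2 - 1 = j + 1 := rfl
    have h2 : j + 2 - 2 = j := rfl
    rw [h1, h2,
      show ((j+2):ℕ) ^ (j+2) = (j+2) ^ (j+1) * (j+2) from pow_succ _ _,
      show ((j+2):ℕ) ^ (j+1) = (j+2) ^ j * (j+2) from pow_succ _ _]
    ring

theorem sigma_zero_order (β : ℝ) (m : ℕ) (hm : 1 ≤ m) :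
    let σ : ℂ → ℂ := fun θ => Complex.exp (θ + (β : ℂ)) - θ ^ m
    (∀ θ : ℂ, σ θ = 0 → deriv σ θ = 0 → θ = (m : ℂ)) ∧
      (∀ θ : ℂ, σ θ = 0 → deriv σ θ = 0 → deriv (deriv σ) θ ≠ 0) := by
  intro σ
  have hexp : ∀ θ : ℂ, HasDerivAt (fun θ : ℂ => Complex.exp (θ + (β : ℂ)))
      (Complex.exp (θ + (β : ℂ))) θ := by
    intro θ
    simpa [Function.comp_def] using (Complex.hasDerivAt_exp (θ + (β : ℂ))).comp θ
      ((hasDerivAt_id θ).add_const (β : ℂ))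
  have hd1 : deriv σ = fun θ : ℂ => Complex.exp (θ + (β : ℂ)) - m * θ ^ (m - 1) := by
    funext θ
    exact ((hexp θ).sub (hasDerivAt_pow m θ)).deriv
  have hd2 : deriv (deriv σ) = fun θ : ℂ =>
      Complex.exp (θ + (β : ℂ)) - m * (((m - 1 : ℕ) : ℂ) * θ ^ (m - 1 - 1)) := by
    rw [hd1]
    funext θ
    exact ((hexp θ).sub ((hasDerivAt_pow (m-1) θ).const_mul (m : ℂ))).deriv
  have key : ∀ θ : ℂ, σ θ = 0 → deriv σ θ = 0 → θ = (m : ℂ) := by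
    intro θ h0 h1
    have he : Complex.exp (θ + (β : ℂ)) = θ ^ m := by
      have := sub_eq_zero.mp h0
      simpa using this
    rw [hd1] at h1
    simp only at h1
    rw [he] at h1
    have hθ : θ ≠ 0 := by
      intro h
      rw [h, zero_pow (by omega : m ≠ 0)] at he
      exact Complex.exp_ne_zero _ he
    have hm' : θ ^ m = θ ^ (m - 1) * θ := by
      rw [← pow_succ]; congr 1; omega
    rw [hm', sub_eq_zero] at h1
    have : θ ^ (m - 1) * θ = θ ^ (m - 1) * m := by rw [h1]; ring
    exact mul_left_cancel₀ (pow_ne_zero _ hθ) this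
  refine ⟨key, ?_⟩
  intro θ h0 h1
  have hθm := key θ h0 h1
  subst hθm
  have he : Complex.exp ((m : ℂ) + (β : ℂ)) = (m : ℂ) ^ m := by
    have := sub_eq_zero.mp h0
    simpa using this
  rw [hd2]
  simp only [he]
  have hmne : (m : ℂ) ≠ 0 := Nat.cast_ne_zero.mpr (by omega)
  have h12 : m - 1 - 1 = m - 2 := by omega
  have hkey : (m : ℂ) ^ m - (m : ℂ) * (((m - 1 : ℕ) : ℂ) * (m : ℂ) ^ (m - 1 - 1))
      = (m : ℂ) ^ (m - 1) := by
    rw [h12]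
    have h := congrArg (fun n : ℕ => (n : ℂ)) (nat_pow_key m hm)
    push_cast at h
    rw [h]; ring
  rw [hkey]
  exact pow_ne_zero _ hmne
end

section
/- Let m be a positive integer and β real. Define on the set where |m·ln(ρ) - β| < ρ the functions x(ρ) = m·ln(ρ) - β, y(ρ) = (ρ² - x(ρ)²)^(1/2), ω(ρ) = arccos(x(ρ)/ρ), and h(ρ) = y(ρ) - m·ω(ρ). Then h'(ρ) = (ρ² - 2m·x(ρ) + m²)/(ρ·y(ρ)), which is strictly positive on this set. -/
theorem h_deriv_pos (m : ℕ) (hm : 1 ≤ m) (β ρ : ℝ) (hρ : 0 < ρ)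
    (hx : |(m : ℝ) * Real.log ρ - β| < ρ) :
    let x : ℝ → ℝ := fun r => (m : ℝ) * Real.log r - β
    let y : ℝ → ℝ := fun r => Real.sqrt (r ^ 2 - x r ^ 2)
    let ω : ℝ → ℝ := fun r => Real.arccos (x r / r)
    let h : ℝ → ℝ := fun r => y r - (m : ℝ) * ω r
    HasDerivAt h ((ρ ^ 2 - 2 * m * x ρ + (m : ℝ) ^ 2) / (ρ * y ρ)) ρ ∧
      0 < (ρ ^ 2 - 2 * m * x ρ + (m : ℝ) ^ 2) / (ρ * y ρ) := by
  intro x y ω h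
  set X : ℝ := (m : ℝ) * Real.log ρ - β with hXdef
  have habs := abs_lt.mp hx
  have hX2 : X ^ 2 < ρ ^ 2 := by nlinarith [habs.1, habs.2]
  have hYpos : 0 < y ρ := Real.sqrt_pos.mpr (by simpa [x] using sub_pos.mpr hX2)
  have hY2 : y ρ ^ 2 = ρ ^ 2 - X ^ 2 := Real.sq_sqrt (by nlinarith)
  -- sqrt(1 - (X/ρ)^2) = y ρ / ρ
  have hsq : Real.sqrt (1 - (X / ρ) ^ 2) = y ρ / ρ := by
    have : 1 - (X / ρ) ^ 2 = (ρ ^ 2 - X ^ 2) / ρ ^ 2 := by field_simp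
    rw [this, Real.sqrt_div (by nlinarith), Real.sqrt_sq hρ.le]
  have hne1 : X / ρ ≠ 1 := by
    intro hc
    have : X = ρ := by field_simp at hc; linarith
    nlinarith
  have hnem1 : X / ρ ≠ -1 := by
    intro hc
    have : X = -ρ := by field_simp at hc; linarith
    nlinarith
  have hx' : HasDerivAt x ((m : ℝ) * ρ⁻¹) ρ :=
    ((Real.hasDerivAt_log hρ.ne').const_mul (m : ℝ)).sub_const β
  have hin : HasDerivAt (fun r => r ^ 2 - x r ^ 2)
      ((2 : ℕ) * ρ ^ 1 - (2 : ℕ) * x ρ ^ 1 * ((m : ℝ) * ρ⁻¹)) ρ :=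
    (hasDerivAt_pow 2 ρ).sub (hx'.pow 2)
  have hY : HasDerivAt y
      (((2 : ℕ) * ρ ^ 1 - (2 : ℕ) * x ρ ^ 1 * ((m : ℝ) * ρ⁻¹)) / (2 * y ρ)) ρ :=
    hin.sqrt (by show ρ ^ 2 - X ^ 2 ≠ 0; nlinarith)
  have hu : HasDerivAt (fun r => x r / r)
      (((m : ℝ) * ρ⁻¹ * ρ - x ρ * 1) / ρ ^ 2) ρ :=
    hx'.div (hasDerivAt_id ρ) hρ.ne'
  have hω : HasDerivAt ω
      (-(1 / Real.sqrt (1 - (x ρ / ρ) ^ 2)) * (((m : ℝ) * ρ⁻¹ * ρ - x ρ * 1) / ρ ^ 2)) ρ :=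
by
    have hc : HasDerivAt Real.arccos (-(1 / Real.sqrt (1 - (x ρ / ρ) ^ 2))) (x ρ / ρ) :=
      Real.hasDerivAt_arccos hnem1 hne1
    have := HasDerivAt.comp_of_eq (x := ρ) (h := fun r => x r / r) hc hu rfl
    exact this
  have hh : HasDerivAt h
      ((((2 : ℕ) * ρ ^ 1 - (2 : ℕ) * x ρ ^ 1 * ((m : ℝ) * ρ⁻¹)) / (2 * y ρ)) -
        (m : ℝ) * (-(1 / Real.sqrt (1 - (x ρ / ρ) ^ 2)) * (((m : ℝ) * ρ⁻¹ * ρ - x ρ * 1) / ρ ^ 2))) ρ :=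
    hY.sub (hω.const_mul (m : ℝ))
  have hxρ : x ρ = X := rfl
  constructor
  · convert hh using 1
    rw [hsq, hxρ]
    field_simp
    ring
  · apply div_pos
    · have : x ρ = X := rfl
      rw [this]; nlinarith [hX2, sq_nonneg (X - (m:ℝ))]
    · positivity
end

section
/- Define h(ω, η, ξ, m) = exp(ωη)·(1 + η/ξ)^(-m) - 1 for a nonzero real ω, complex η and ξ, and positive integer m. If |η| < min(1/2, 1/(3|ω|/2)) and |ξ| > (8/|ω| + 1)·m, then (|ω|/4)·|η| ≤ |h(ω, η, ξ, m)| ≤ (7|ω|/4)·|η|. -/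
set_option maxHeartbeats 1000000 in
theorem h_quasi_linearity (ω : ℝ) (hω : ω ≠ 0) (η ξ : ℂ) (hξ : ξ ≠ 0)
    (m : ℕ) (hm : 1 ≤ m)
    (hη : ‖η‖ < min (1/2) (1 / (3 * |ω| / 2)))
    (hξbig : (8 / |ω| + 1) * m < ‖ξ‖) :
    (|ω| / 4) * ‖η‖ ≤
        ‖Complex.exp (ω * η) * (1 + η / ξ) ^ (-(m : ℤ)) - 1‖ ∧
      ‖Complex.exp (ω * η) * (1 + η / ξ) ^ (-(m : ℤ)) - 1‖ ≤
        (7 * |ω| / 4) * ‖η‖ := by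
  have hω' : (0:ℝ) < |ω| := abs_pos.mpr hω
  have hηnn : (0:ℝ) ≤ ‖η‖ := norm_nonneg η
  have hξpos : (0:ℝ) < ‖ξ‖ := norm_pos_iff.mpr hξ
  have hm1 : (1:ℝ) ≤ (m:ℝ) := by exact_mod_cast hm
  set z : ℂ := (ω:ℂ) * η with hz
  set w : ℂ := η / ξ with hwdef
  set t : ℝ := |ω| * ‖η‖ with htdef
  have htnn : 0 ≤ t := by positivity
  have habsz : ‖z‖ = t := by
    rw [hz, norm_mul, Complex.norm_real, Real.norm_eq_abs]
  have hη3 : ‖η‖ < 1 / (3 * |ω| / 2) := lt_of_lt_of_le hη (min_le_right _ _)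
  have ht23 : t ≤ 2/3 := by
    have h1 : ‖η‖ * (3 * |ω| / 2) < 1 := by
      rw [← lt_div_iff₀ (by positivity)]
      exact hη3
    nlinarith
  set u : ℝ := (m:ℝ) * ‖w‖ with hudef
  have hwabs : ‖w‖ = ‖η‖ / ‖ξ‖ := norm_div _ _
  have hunn : 0 ≤ u := by positivity
  have hu : u ≤ t / 8 := by
    have h8 : 8 * (m:ℝ) ≤ |ω| * ‖ξ‖ := by
      have h1 : (8 / |ω|) * (m:ℝ) ≤ (8 / |ω| + 1) * (m:ℝ) := by
        have : (0:ℝ) ≤ (m:ℝ) := by positivity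
        nlinarith
      have h2 : (8 / |ω|) * (m:ℝ) < ‖ξ‖ := lt_of_le_of_lt h1 hξbig
      rw [div_mul_eq_mul_div, div_lt_iff₀ hω'] at h2
      nlinarith
    have h9 := mul_le_mul_of_nonneg_right h8 hηnn
    rw [hudef, hwabs, htdef]
    rw [← mul_div_assoc, div_le_div_iff₀ hξpos (by norm_num : (0:ℝ) < 8)]
    nlinarith
  have hu12 : u ≤ 1/12 := by linarith
  have hwle : ‖w‖ ≤ u := by
    rw [hudef]
    nlinarith [norm_nonneg w]
  -- bound on |1 + w| from below
  have h1w : 1 - ‖w‖ ≤ ‖1 + w‖ := by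
    have := norm_sub_norm_le (1:ℂ) (-w)
    simpa [sub_neg_eq_add] using this
  have h1wpos : (0:ℝ) < ‖1 + w‖ := by
    have : ‖w‖ ≤ 1/12 := le_trans hwle hu12
    linarith
  have h1wne : (1 + w) ≠ 0 := by
    intro h
    rw [h, norm_zero] at h1wpos
    exact lt_irrefl _ h1wpos
  -- lower bound on |(1+w)^m|
  have hpowlow : 1 - u ≤ ‖(1 + w) ^ m‖ := by
    have hwn : 0 ≤ 1 - ‖w‖ := by
      have : ‖w‖ ≤ 1/12 := le_trans hwle hu12
      linarith
    have h1 : 1 + (m:ℝ) * (-(‖w‖)) ≤ (1 + (-(‖w‖))) ^ m :=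
      one_add_mul_le_pow (by nlinarith [norm_nonneg w]) m
    have h2 : (1 - ‖w‖) ^ m ≤ (‖1 + w‖) ^ m :=
      pow_le_pow_left₀ hwn h1w m
    rw [norm_pow]
    have : 1 + (m:ℝ) * (-(‖w‖)) = 1 - u := by rw [hudef]; ring
    rw [this] at h1
    calc 1 - u ≤ (1 + (-(‖w‖))) ^ m := h1
      _ = (1 - ‖w‖) ^ m := by ring_nf
      _ ≤ (‖1 + w‖) ^ m := h2
  have hpowpos : (0:ℝ) < ‖(1 + w) ^ m‖ := by
    have : (11:ℝ)/12 ≤ 1 - u := by linarith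
    linarith
  -- exp(1/12)-type bound : exp u ≤ 1 + u + (3/4) u^2
  have hexpu : Real.exp u ≤ 209/192 := by
    have hb := Real.exp_bound' hunn (by linarith : u ≤ 1) (by norm_num : 0 < 2)
    have hsum : (∑ i ∈ Finset.range 2, u ^ i / (i.factorial : ℝ)) = 1 + u := by
      simp [Finset.sum_range_succ]
    rw [hsum] at hb
    norm_num [Nat.factorial] at hb
    nlinarith
  -- numerator bound : |(1+w)^m - 1| ≤ u * (209/192)
  have hnum : ‖(1 + w) ^ m - 1‖ ≤ u * (209/192) := by
    have hkey : (1 + w) ^ m - 1 = (∑ i ∈ Finset.range m, (1 + w) ^ i) * w := by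
      have := geom_sum_mul (1 + w) m
      calc (1 + w) ^ m - 1 = (∑ i ∈ Finset.range m, (1 + w) ^ i) * (1 + w - 1) := this.symm
        _ = (∑ i ∈ Finset.range m, (1 + w) ^ i) * w := by ring
    rw [hkey, norm_mul]
    have hsumb : ‖∑ i ∈ Finset.range m, (1 + w) ^ i‖
        ≤ (m:ℝ) * (1 + ‖w‖) ^ m := by
      calc ‖∑ i ∈ Finset.range m, (1 + w) ^ i‖
          ≤ ∑ i ∈ Finset.range m, ‖(1 + w) ^ i‖ :=
            norm_sum_le _ _
        _ ≤ ∑ i ∈ Finset.range m, (1 + ‖w‖) ^ m := by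
            apply Finset.sum_le_sum
            intro i hi
            rw [norm_pow]
            have h1 : ‖1 + w‖ ≤ 1 + ‖w‖ := by
              have := norm_add_le 1 w
              simpa using this
            calc (‖1 + w‖) ^ i ≤ (1 + ‖w‖) ^ i :=
                pow_le_pow_left₀ (norm_nonneg _) h1 i
              _ ≤ (1 + ‖w‖) ^ m := by
                apply pow_le_pow_right₀ (by nlinarith [norm_nonneg w])
                exact le_of_lt (Finset.mem_range.mp hi)
        _ = (m:ℝ) * (1 + ‖w‖) ^ m := by
            rw [Finset.sum_const, Finset.card_range, nsmul_eq_mul]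
    have hpowexp : (1 + ‖w‖) ^ m ≤ 209/192 := by
      calc (1 + ‖w‖) ^ m ≤ (Real.exp (‖w‖)) ^ m := by
            apply pow_le_pow_left₀ (by nlinarith [norm_nonneg w])
            linarith [Real.add_one_le_exp (‖w‖)]
        _ = Real.exp ((m:ℝ) * ‖w‖) := by
            rw [← Real.exp_nat_mul]
        _ = Real.exp u := by rw [hudef]
        _ ≤ 209/192 := hexpu
    calc ‖∑ i ∈ Finset.range m, (1 + w) ^ i‖ * ‖w‖
        ≤ ((m:ℝ) * (209/192)) * ‖w‖ := by
          apply mul_le_mul_of_nonneg_right _ (norm_nonneg w)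
          calc ‖∑ i ∈ Finset.range m, (1 + w) ^ i‖
              ≤ (m:ℝ) * (1 + ‖w‖) ^ m := hsumb
            _ ≤ (m:ℝ) * (209/192) := by
                apply mul_le_mul_of_nonneg_left hpowexp (by positivity)
      _ = u * (209/192) := by rw [hudef]; ring
  -- bound on B := (1+w)^(-m) - 1
  have hB : ‖(1 + w) ^ (-(m:ℤ)) - 1‖ ≤ (19/16) * u := by
    have hzpow : ((1 + w) : ℂ) ^ (-(m:ℤ)) = ((1 + w) ^ m)⁻¹ := by
      rw [zpow_neg, zpow_natCast]
    have hne : ((1 + w) : ℂ) ^ m ≠ 0 := pow_ne_zero m h1wne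
    have heq : ((1 + w) ^ m)⁻¹ - 1 = (1 - (1 + w) ^ m) / ((1 + w) ^ m) := by
      field_simp
    rw [hzpow, heq, norm_div]
    have hnum' : ‖1 - (1 + w) ^ m‖ ≤ u * (209/192) := by
      rw [← norm_neg]
      simpa [neg_sub] using hnum
    calc ‖1 - (1 + w) ^ m‖ / ‖(1 + w) ^ m‖
        ≤ (u * (209/192)) / (1 - u) := by
          apply div_le_div₀ (by positivity) hnum' (by linarith) hpowlow
      _ ≤ (19/16) * u := by
          rw [div_le_iff₀ (by linarith : (0:ℝ) < 1 - u)]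
          nlinarith
  -- exp bounds
  have habsz1 : ‖z‖ ≤ 1 := by rw [habsz]; linarith
  have hA : ‖Complex.exp z - 1 - z‖ ≤ (35/54) * t^2 := by
    have hb := Complex.exp_bound habsz1 (by norm_num : 0 < 3)
    have hsum : (∑ i ∈ Finset.range 3, z ^ i / (i.factorial : ℂ)) = 1 + z + z^2/2 := by
      norm_num [Finset.sum_range_succ, Nat.factorial]
      try ring
    rw [hsum] at hb
    norm_num [Nat.factorial] at hb
    rw [habsz] at hb
    have hsplit : Complex.exp z - 1 - z = (Complex.exp z - (1 + z + z^2/2)) + z^2/2 := by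
      ring
    rw [hsplit]
    calc ‖(Complex.exp z - (1 + z + z^2/2)) + z^2/2‖
        ≤ ‖Complex.exp z - (1 + z + z^2/2)‖ + ‖z^2/2‖ :=
          norm_add_le _ _
      _ ≤ t^3 * (2/9) + t^2/2 := by
          have : ‖z^2/2‖ = t^2/2 := by
            rw [norm_div, norm_pow, habsz]
            simp
          rw [this]
          linarith
      _ ≤ (35/54) * t^2 := by nlinarith
  have hexpz : ‖Complex.exp z‖ ≤ 2 := by
    rw [Complex.norm_exp]
    have hre : z.re ≤ 2/3 := by
      have h1 : z.re ≤ ‖z‖ := Complex.re_le_norm z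
      rw [habsz] at h1
      linarith
    calc Real.exp z.re ≤ Real.exp (2/3) := Real.exp_le_exp.mpr hre
      _ ≤ 2 := by
        have hb := Real.exp_bound' (by norm_num : (0:ℝ) ≤ 2/3) (by norm_num) (by norm_num : 0 < 2)
        have hsum : (∑ i ∈ Finset.range 2, (2/3:ℝ) ^ i / (i.factorial : ℝ)) = 1 + 2/3 := by
          simp [Finset.sum_range_succ]
        rw [hsum] at hb
        norm_num [Nat.factorial] at hb
        linarith
  -- main estimate
  set E : ℂ := Complex.exp z * (1 + w) ^ (-(m:ℤ)) - 1 with hE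
  have hdecomp : E - z = (Complex.exp z - 1 - z) +
      Complex.exp z * ((1 + w) ^ (-(m:ℤ)) - 1) := by
    rw [hE]; ring
  have hmain : ‖E - z‖ ≤ (3/4) * t := by
    rw [hdecomp]
    calc ‖(Complex.exp z - 1 - z) + Complex.exp z * ((1 + w) ^ (-(m:ℤ)) - 1)‖
        ≤ ‖Complex.exp z - 1 - z‖ +
          ‖Complex.exp z‖ * ‖(1 + w) ^ (-(m:ℤ)) - 1‖ := by
          rw [← norm_mul]
          exact norm_add_le _ _
      _ ≤ (35/54) * t^2 + 2 * ((19/16) * u) := by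
          have := mul_le_mul hexpz hB (norm_nonneg _) (by norm_num)
          linarith
      _ ≤ (3/4) * t := by nlinarith
  constructor
  · have h1 : ‖z‖ - ‖z - E‖ ≤ ‖E‖ := by
      have := norm_sub_norm_le z (z - E)
      simpa using this
    have h2 : ‖z - E‖ = ‖E - z‖ := by
      rw [← norm_neg, neg_sub]
    rw [h2, habsz] at h1
    have : (|ω| / 4) * ‖η‖ = t/4 - 0 := by rw [htdef]; ring
    rw [this]
    have : ‖Complex.exp (↑ω * η) * (1 + η / ξ) ^ (-(m:ℤ)) - 1‖ = ‖E‖ := rfl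
    rw [this]
    linarith
  · have h1 : ‖E‖ ≤ ‖z‖ + ‖E - z‖ := by
      have := norm_add_le (z : ℂ) (E - z)
      simpa using this
    rw [habsz] at h1
    have : (7 * |ω| / 4) * ‖η‖ = (7/4) * t := by rw [htdef]; ring
    rw [this]
    have hEq : ‖Complex.exp (↑ω * η) * (1 + η / ξ) ^ (-(m:ℤ)) - 1‖ = ‖E‖ := rfl
    rw [hEq]
    linarith
end
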